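/- Let τ : Fin m₁ → Fin r₁ and ν : Fin m₂ → Fin r₂ be subword patterns and let f₁, f₂ each be a trivial bijection (one of: identity, reverse, complement, or reverse composed with complement). Then for every n ≥ 0 and k ≥ 1, the number of k-ary words of length n avoiding the shuffle pattern τ-ℓ-ν equals the number of k-ary words of length n avoiding the shuffle pattern f₁(τ)-ℓ-f₂(ν). -/

import Mathlib

/-- A word `σ : Fin n → Fin k` has an occurrence of the subword pattern `p : Fin m → Fin l`
at position `i` if `i + m ≤ n` and the corresponding letters are order-isomorphic to `p`. -/
def OccursAt {m l n k : ℕ} (p : Fin m → Fin l) (σ : Fin n → Fin k) (i : ℕ) : Prop :=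
  ∃ h : i + m ≤ n, ∀ a b : Fin m,
    (σ ⟨i + a, lt_of_lt_of_le (Nat.add_lt_add_left a.isLt i) h⟩ <
      σ ⟨i + b, lt_of_lt_of_le (Nat.add_lt_add_left b.isLt i) h⟩) ↔ p a < p b

/-- `σ` avoids the subword pattern `p`. -/
def AvoidsPat {m l n k : ℕ} (p : Fin m → Fin l) (σ : Fin n → Fin k) : Prop :=
  ∀ i : ℕ, ¬ OccursAt p σ i

/-- `σ` contains the shuffle pattern `τ-ℓ-ν`: there are an occurrence of `τ` at `i`,
a later position `pp` carrying a letter larger than all letters of the two occurrences,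
and a still later occurrence of `ν` at `q`. -/
def ContainsShuffle {m₁ r₁ m₂ r₂ n k : ℕ} (τ : Fin m₁ → Fin r₁) (ν : Fin m₂ → Fin r₂)
    (σ : Fin n → Fin k) : Prop :=
  ∃ (i pp q : ℕ) (hp : pp < n),
    i + m₁ ≤ pp ∧ pp < q ∧ q + m₂ ≤ n ∧ OccursAt τ σ i ∧ OccursAt ν σ q ∧
      ∀ (r : ℕ) (hr : r < n),
        ((i ≤ r ∧ r < i + m₁) ∨ (q ≤ r ∧ r < q + m₂)) → σ ⟨r, hr⟩ < σ ⟨pp, hp⟩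

/-- The reverse of a pattern: `R(p)(a) = p(m - 1 - a)`. -/
def PatRev {m l : ℕ} (p : Fin m → Fin l) : Fin m → Fin l := fun a => p a.rev

/-- The complement of a pattern: `C(p)(a) = l - 1 - p(a)`. -/
def PatCompl {m l : ℕ} (p : Fin m → Fin l) : Fin m → Fin l := fun a => (p a).rev

/-- A trivial bijection on patterns is one of: identity, reverse, complement,
or reverse composed with complement. -/
def IsTrivialBij {m l : ℕ} (f : (Fin m → Fin l) → (Fin m → Fin l)) : Prop :=
  f = id ∨ f = PatRev ∨ f = PatCompl ∨ f = fun p => PatRev (PatCompl p)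

namespace ShufAux

/-- list-level occurrence -/
def occL {m l : ℕ} (p : Fin m → Fin l) (L : List ℕ) (i : ℕ) : Prop :=
  i + m ≤ L.length ∧ ∀ a b : Fin m, (L.getD (i + a) 0 < L.getD (i + b) 0 ↔ p a < p b)

def HasPat {m l : ℕ} (p : Fin m → Fin l) (L : List ℕ) : Prop := ∃ i, occL p L i

def HasLow {m l : ℕ} (p : Fin m → Fin l) (K : ℕ) (L : List ℕ) : Prop :=
  ∃ i, occL p L i ∧ ∀ a : Fin m, L.getD (i + a) 0 < K

def CS {m₁ r₁ m₂ r₂ : ℕ} (τ : Fin m₁ → Fin r₁) (ν : Fin m₂ → Fin r₂) (L : List ℕ) : Prop :=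
  ∃ i pp q, i + m₁ ≤ pp ∧ pp < q ∧ q + m₂ ≤ L.length ∧ occL τ L i ∧ occL ν L q ∧
    (∀ a : Fin m₁, L.getD (i + a) 0 < L.getD pp 0) ∧
    (∀ b : Fin m₂, L.getD (q + b) 0 < L.getD pp 0)

def W (n k : ℕ) (P : List ℕ → Prop) : Type :=
  {L : List ℕ // L.length = n ∧ ((∀ x ∈ L, x < k) ∧ P L)}

lemma getD_mem {L : List ℕ} {i : ℕ} (h : i < L.length) : L.getD i 0 ∈ L := by
  rw [List.getD_eq_getElem _ _ h]; exact List.getElem_mem h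

instance finW (n k : ℕ) (P : List ℕ → Prop) : Finite (W n k P) := by
  apply Finite.of_injective (f := fun (L : W n k P) (i : Fin n) =>
    (⟨L.1.getD i 0, L.2.2.1 _ (getD_mem (by rw [L.2.1]; exact i.isLt))⟩ : Fin k))
  intro L M h
  apply Subtype.ext
  apply List.ext_getElem (by rw [L.2.1, M.2.1])
  intro i h1 h2
  have := congrFun h ⟨i, by rw [← L.2.1]; exact h1⟩
  have h3 := congrArg Fin.val this
  simp only at h3
  rwa [List.getD_eq_getElem _ _ h1, List.getD_eq_getElem _ _ h2] at h3

instance finW' (n k : ℕ) (P : List ℕ → Prop) :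
    Finite {L : List ℕ // L.length = n ∧ ((∀ x ∈ L, x < k) ∧ P L)} := finW n k P

noncomputable def cnt (n k : ℕ) (P : List ℕ → Prop) : ℕ := Nat.card (W n k P)

lemma card_sigma_fin {n : ℕ} (β : Fin n → Type*) [∀ j, Finite (β j)] :
    Nat.card ((j : Fin n) × β j) = ∑ j : Fin n, Nat.card (β j) := by
  letI : ∀ j, Fintype (β j) := fun j => Fintype.ofFinite _
  simp [Nat.card_eq_fintype_card, Fintype.card_sigma]

/-- getD of append beyond the prefix -/
lemma gApp2 (A B : List ℕ) (j : ℕ) : (A ++ B).getD (A.length + j) 0 = B.getD j 0 := by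
  rw [List.getD_append_right _ _ _ _ (Nat.le_add_right _ _)]
  congr 1; omega

lemma gApp1 (A B : List ℕ) {j : ℕ} (h : j < A.length) : (A ++ B).getD j 0 = A.getD j 0 :=
  List.getD_append _ _ _ _ h

lemma occ_append_left {m l : ℕ} {p : Fin m → Fin l} {A B : List ℕ} {i : ℕ}
    (h : i + m ≤ A.length) : occL p (A ++ B) i ↔ occL p A i := by
  have key : ∀ a : Fin m, (A ++ B).getD (i + a) 0 = A.getD (i + a) 0 := fun a =>
    gApp1 A B (by have := a.isLt; omega)
  constructor
  · rintro ⟨h1, h2⟩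
    exact ⟨h, fun a b => by rw [← key a, ← key b]; exact h2 a b⟩
  · rintro ⟨h1, h2⟩
    exact ⟨by rw [List.length_append]; omega, fun a b => by rw [key a, key b]; exact h2 a b⟩

lemma occ_append_right {m l : ℕ} {p : Fin m → Fin l} {A B : List ℕ} {j : ℕ} :
    occL p (A ++ B) (A.length + j) ↔ occL p B j := by
  have key : ∀ a : Fin m, (A ++ B).getD (A.length + j + a) 0 = B.getD (j + a) 0 := fun a => by
    rw [Nat.add_assoc]; exact gApp2 A B (j + a)
  constructor
  · rintro ⟨h1, h2⟩
    refine ⟨by rw [List.length_append] at h1; omega,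
      fun a b => by rw [← key a, ← key b]; exact h2 a b⟩
  · rintro ⟨h1, h2⟩
    exact ⟨by rw [List.length_append]; omega, fun a b => by rw [key a, key b]; exact h2 a b⟩

/-- a window whose letters are `< K` misses any position carrying letter `K` -/
lemma window_split {m : ℕ} {L : List ℕ} {i s K : ℕ}
    (hs : L.getD s 0 = K) (hw : ∀ a : Fin m, L.getD (i + a) 0 < K) :
    i + m ≤ s ∨ s + 1 ≤ i ∨ m = 0 := by
  by_contra hcon
  push_neg at hcon
  obtain ⟨h1, h2, h3⟩ := hcon
  have ha : s - i < m := by omega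
  have := hw ⟨s - i, ha⟩
  simp only at this
  rw [show i + (s - i) = s by omega, hs] at this
  omega


lemma occ_shift {m l : ℕ} {p : Fin m → Fin l} {A L' : List ℕ} {K j : ℕ} :
    occL p (A ++ K :: L') (A.length + 1 + j) ↔ occL p L' j := by
  have h := occ_append_right (p := p) (A := A ++ [K]) (B := L') (j := j)
  rwa [show (A ++ [K]).length = A.length + 1 by simp,
    show (A ++ [K]) ++ L' = A ++ K :: L' by simp] at h

lemma getD_shift {A L' : List ℕ} {K j : ℕ} :
    (A ++ K :: L').getD (A.length + 1 + j) 0 = L'.getD j 0 := by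
  have h := gApp2 (A ++ [K]) L' j
  rwa [show (A ++ [K]).length = A.length + 1 by simp,
    show (A ++ [K]) ++ L' = A ++ K :: L' by simp] at h

lemma occ_empty {l : ℕ} {p : Fin 0 → Fin l} {L : List ℕ} {i : ℕ} (h : i ≤ L.length) :
    occL p L i := ⟨by omega, fun a b => absurd a.isLt (by omega)⟩

section Char

variable {m₁ r₁ m₂ r₂ : ℕ} (τ : Fin m₁ → Fin r₁) (ν : Fin m₂ → Fin r₂)

lemma CS_nil : ¬ CS τ ν [] := by
  rintro ⟨i, pp, q, h1, h2, h3, -⟩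
  simp only [List.length_nil] at h3
  omega

lemma not_hasPat_CS {L : List ℕ} (h : ¬ HasPat τ L) : ¬ CS τ ν L := by
  rintro ⟨i, pp, q, h1, h2, h3, h4, -⟩
  exact h ⟨i, h4⟩

lemma CS_to_hasLow {K : ℕ} {L : List ℕ} (hL : ∀ x ∈ L, x < K + 1) (h : CS τ ν L) :
    HasLow ν K L := by
  obtain ⟨i, pp, q, h1, h2, h3, h4, h5, h6, h7⟩ := h
  have hpp : L.getD pp 0 < K + 1 := hL _ (getD_mem (by omega))
  exact ⟨q, h5, fun b => by have := h7 b; omega⟩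

lemma hasLow_iff_hasPat {K : ℕ} {L : List ℕ} (hL : ∀ x ∈ L, x < K) :
    HasLow ν K L ↔ HasPat ν L := by
  constructor
  · rintro ⟨i, h1, -⟩; exact ⟨i, h1⟩
  · rintro ⟨i, h1⟩
    refine ⟨i, h1, fun a => ?_⟩
    exact hL _ (getD_mem (by have := a.isLt; have := h1.1; omega))

variable {K : ℕ} {A L' : List ℕ}

lemma sep_getD : (A ++ K :: L').getD A.length 0 = K := by
  have h := gApp2 A (K :: L') 0
  rw [Nat.add_zero] at h
  rw [h]
  rfl

lemma hasLow_split (hA : ∀ x ∈ A, x < K) :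
    HasLow ν K (A ++ K :: L') ↔ HasPat ν A ∨ HasLow ν K L' := by
  have hsep : (A ++ K :: L').getD A.length 0 = K := sep_getD
  have hlen : (A ++ K :: L').length = A.length + 1 + L'.length := by simp; omega
  constructor
  · rintro ⟨i, h1, h2⟩
    rcases window_split hsep h2 with h | h | h
    · exact Or.inl ⟨i, (occ_append_left h).1 h1⟩
    · obtain ⟨j, rfl⟩ : ∃ j, i = A.length + 1 + j := ⟨i - A.length - 1, by omega⟩
      refine Or.inr ⟨j, occ_shift.1 h1, fun a => ?_⟩
      have h3 := h2 a
      rwa [show A.length + 1 + j + ↑a = A.length + 1 + (j + ↑a) by omega, getD_shift] at h3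
    · subst h
      exact Or.inr ⟨0, occ_empty (by omega), fun a => absurd a.isLt (by omega)⟩
  · rintro (⟨i, h1⟩ | ⟨i, h1, h2⟩)
    · have hlen1 := h1.1
      refine ⟨i, (occ_append_left (by omega)).2 h1, fun a => ?_⟩
      rw [gApp1 _ _ (by have := a.isLt; omega)]
      exact hA _ (getD_mem (by have := a.isLt; omega))
    · refine ⟨A.length + 1 + i, occ_shift.2 h1, fun a => ?_⟩
      rw [show A.length + 1 + i + ↑a = A.length + 1 + (i + ↑a) by omega, getD_shift]
      exact h2 a

lemma CS_split (hA : ∀ x ∈ A, x < K) (hL' : ∀ x ∈ L', x < K + 1) :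
    CS τ ν (A ++ K :: L') ↔ CS τ ν A ∨ CS τ ν L' ∨ (HasPat τ A ∧ HasLow ν K L') := by
  have hsep : (A ++ K :: L').getD A.length 0 = K := sep_getD
  have hlen : (A ++ K :: L').length = A.length + 1 + L'.length := by simp; omega
  have hLbdd : ∀ x ∈ A ++ K :: L', x < K + 1 := by
    intro x hx
    rcases List.mem_append.1 hx with h | h
    · exact Nat.lt_succ_of_lt (hA _ h)
    · rcases List.mem_cons.1 h with h | h
      · omega
      · exact hL' _ h
  constructor
  · rintro ⟨i, pp, q, h1, h2, h3, h4, h5, h6, h7⟩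
    have hc : (A ++ K :: L').getD pp 0 < K + 1 := hLbdd _ (getD_mem (by omega))
    have hw2 : ∀ b : Fin m₂, (A ++ K :: L').getD (q + b) 0 < K := fun b => by
      have := h7 b; omega
    have hw1 : ∀ a : Fin m₁, (A ++ K :: L').getD (i + a) 0 < K := fun a => by
      have := h6 a; omega
    have hq : q + m₂ ≤ A.length ∨ A.length + 1 ≤ q := by
      rcases window_split hsep hw2 with h | h | h
      · exact Or.inl h
      · exact Or.inr h
      · subst h; omega
    rcases hq with hq | hq
    · -- whole configuration inside A
      left
      have hppA : pp < A.length := by omega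
      refine ⟨i, pp, q, h1, h2, by omega, (occ_append_left (by omega)).1 h4,
        (occ_append_left (by omega)).1 h5, fun a => ?_, fun b => ?_⟩
      · have h := h6 a
        rwa [gApp1 _ _ (by have := a.isLt; omega), gApp1 _ _ hppA] at h
      · have h := h7 b
        rwa [gApp1 _ _ (by have := b.isLt; omega), gApp1 _ _ hppA] at h
    · obtain ⟨q', rfl⟩ : ∃ q', q = A.length + 1 + q' := ⟨q - A.length - 1, by omega⟩
      have hlow : HasLow ν K L' := by
        refine ⟨q', occ_shift.1 h5, fun b => ?_⟩
        have h := hw2 b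
        rwa [show A.length + 1 + q' + ↑b = A.length + 1 + (q' + ↑b) by omega, getD_shift] at h
      rcases window_split hsep hw1 with hi | hi | hi
      · exact Or.inr (Or.inr ⟨⟨i, (occ_append_left hi).1 h4⟩, hlow⟩)
      · -- whole configuration inside L'
        obtain ⟨i', rfl⟩ : ∃ i', i = A.length + 1 + i' := ⟨i - A.length - 1, by omega⟩
        obtain ⟨pp', rfl⟩ : ∃ pp', pp = A.length + 1 + pp' := ⟨pp - A.length - 1, by omega⟩
        refine Or.inr (Or.inl ⟨i', pp', q', by omega, by omega, by omega,
          occ_shift.1 h4, occ_shift.1 h5, fun a => ?_, fun b => ?_⟩)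
        · have h := h6 a
          rwa [show A.length + 1 + i' + ↑a = A.length + 1 + (i' + ↑a) by omega,
            getD_shift, getD_shift] at h
        · have h := h7 b
          rwa [show A.length + 1 + q' + ↑b = A.length + 1 + (q' + ↑b) by omega,
            getD_shift, getD_shift] at h
      · subst hi
        exact Or.inr (Or.inr ⟨⟨0, occ_empty (by omega)⟩, hlow⟩)
  · rintro (⟨i, pp, q, h1, h2, h3, h4, h5, h6, h7⟩ | ⟨i, pp, q, h1, h2, h3, h4, h5, h6, h7⟩
      | ⟨⟨i, h4⟩, ⟨j, h5, h5l⟩⟩)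
    · -- configuration in A
      have hppA : pp < A.length := by omega
      refine ⟨i, pp, q, h1, h2, by omega, (occ_append_left (by omega)).2 h4,
        (occ_append_left (by omega)).2 h5, fun a => ?_, fun b => ?_⟩
      · rw [gApp1 _ _ (by have := a.isLt; omega), gApp1 _ _ hppA]; exact h6 a
      · rw [gApp1 _ _ (by have := b.isLt; omega), gApp1 _ _ hppA]; exact h7 b
    · -- configuration in L'
      refine ⟨A.length + 1 + i, A.length + 1 + pp, A.length + 1 + q,
        by omega, by omega, by omega, occ_shift.2 h4, occ_shift.2 h5,
        fun a => ?_, fun b => ?_⟩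
      · rw [show A.length + 1 + i + ↑a = A.length + 1 + (i + ↑a) by omega,
          getD_shift, getD_shift]
        exact h6 a
      · rw [show A.length + 1 + q + ↑b = A.length + 1 + (q + ↑b) by omega,
          getD_shift, getD_shift]
        exact h7 b
    · -- separator as middle letter
      have hiA : i + m₁ ≤ A.length := h4.1
      refine ⟨i, A.length, A.length + 1 + j, hiA, by omega,
        by have := h5.1; omega, (occ_append_left hiA).2 h4, occ_shift.2 h5,
        fun a => ?_, fun b => ?_⟩
      · rw [gApp1 _ _ (by have := a.isLt; omega), hsep]
        exact hA _ (getD_mem (by have := a.isLt; omega))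
      · rw [hsep, show A.length + 1 + j + ↑b = A.length + 1 + (j + ↑b) by omega, getD_shift]
        exact h5l b

end Char

section Decomp

open Classical in
/-- case split of a subtype along a predicate -/
noncomputable def caseSplit {α : Type} (r q r1 r2 : α → Prop)
    (h1 : ∀ a, r a → q a → r1 a) (h2 : ∀ a, r a → ¬q a → r2 a)
    (h3 : ∀ a, r1 a → r a) (h4 : ∀ a, r2 a → r a) (h5 : ∀ a, r1 a → q a)
    (h6 : ∀ a, r2 a → ¬ q a) :
    {a // r a} ≃ {a // r1 a} ⊕ {a // r2 a} where
  toFun x := if h : q x.1 then Sum.inl ⟨x.1, h1 _ x.2 h⟩ else Sum.inr ⟨x.1, h2 _ x.2 h⟩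
  invFun x := x.elim (fun a => ⟨a.1, h3 _ a.2⟩) (fun a => ⟨a.1, h4 _ a.2⟩)
  left_inv x := by
    by_cases h : q x.1
    · simp only [dif_pos h]
      rfl
    · simp only [dif_neg h]
      rfl
  right_inv x := by
    rcases x with a | a
    · simp only [Sum.elim_inl, dif_pos (h5 _ a.2)]
      simp [h5 _ a.2]
    · simp only [Sum.elim_inr, dif_neg (h6 _ a.2)]
      simp [h6 _ a.2]

/-- split a pair-subtype (with an overall length constraint) into a sigma over the
length of the first component -/
noncomputable def sigmaPairs (P1 P2 : List ℕ → Prop) (n : ℕ) :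
    {AL : List ℕ × List ℕ // AL.1.length + 1 + AL.2.length = n ∧ P1 AL.1 ∧ P2 AL.2} ≃
      (j : Fin n) × ({A : List ℕ // A.length = ↑j ∧ P1 A} ×
        {B : List ℕ // B.length = n - 1 - ↑j ∧ P2 B}) where
  toFun x := ⟨⟨x.1.1.length, by have := x.2.1; omega⟩,
    ⟨x.1.1, rfl, x.2.2.1⟩, ⟨x.1.2, by
      show x.1.2.length = n - 1 - x.1.1.length
      have := x.2.1; omega, x.2.2.2⟩⟩
  invFun y := ⟨(y.2.1.1, y.2.2.1), by
    have h1 := y.2.1.2.1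
    have h2 := y.2.2.2.1
    have h3 := y.1.isLt
    refine ⟨?_, y.2.1.2.2, y.2.2.2.2⟩
    show (y.2.1.1 : List ℕ).length + 1 + (y.2.2.1 : List ℕ).length = n
    omega⟩
  left_inv x := rfl
  right_inv y := by
    rcases y with ⟨⟨jv, hj⟩, ⟨A, hA1, hA2⟩, ⟨B, hB1, hB2⟩⟩
    simp only at hA1
    subst hA1
    rfl

variable {K n : ℕ} {P P₀ : List ℕ → Prop} {R : List ℕ → List ℕ → Prop}

lemma takeWhile_spec (A L' : List ℕ) (hA : ∀ x ∈ A, x < K) :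
    (A ++ K :: L').takeWhile (fun x => decide (x < K)) = A ∧
    (A ++ K :: L').dropWhile (fun x => decide (x < K)) = K :: L' := by
  induction A with
  | nil => simp
  | cons a A ih =>
    have ha : a < K := hA a List.mem_cons_self
    have ih' := ih (fun x hx => hA x (List.mem_cons_of_mem a hx))
    constructor
    · rw [List.cons_append, List.takeWhile_cons_of_pos (by simpa using ha), ih'.1]
    · rw [List.cons_append, List.dropWhile_cons_of_pos (by simpa using ha), ih'.2]

abbrev lowP (K : ℕ) : ℕ → Bool := fun y => decide (y < K)

lemma decomp_eq {K : ℕ} (L : List ℕ) (hbdd : ∀ y ∈ L, y < K + 1) (h : ¬∀ y ∈ L, y < K) :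
    (∀ y ∈ L.takeWhile (lowP K), y < K) ∧
    (∀ y ∈ (L.dropWhile (lowP K)).tail, y < K + 1) ∧
    L = L.takeWhile (lowP K) ++ K :: (L.dropWhile (lowP K)).tail := by
  have htw : ∀ y ∈ L.takeWhile (lowP K), y < K := by
    intro y hy
    simpa using List.mem_takeWhile_imp hy
  have hdnil : L.dropWhile (lowP K) ≠ [] := by
    intro hc
    exact h (by
      intro y hy
      rw [← List.takeWhile_append_dropWhile (p := lowP K) (l := L), hc,
        List.append_nil] at hy
      exact htw y hy)
  have hhead : (L.dropWhile (lowP K)).head hdnil = K := by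
    have h1 := List.head_dropWhile_not (lowP K) hdnil
    have h2 : (L.dropWhile (lowP K)).head hdnil ∈ L :=
      (List.dropWhile_sublist _).mem (List.head_mem hdnil)
    have h3 := hbdd _ h2
    simp only [lowP, decide_eq_false_iff_not] at h1
    omega
  have htail : ∀ y ∈ (L.dropWhile (lowP K)).tail, y < K + 1 := by
    intro y hy
    exact hbdd _ (((List.tail_sublist _).trans (List.dropWhile_sublist _)).mem hy)
  refine ⟨htw, htail, ?_⟩
  have e := List.cons_head_tail hdnil
  conv_lhs => rw [← List.takeWhile_append_dropWhile (p := lowP K) (l := L), ← e]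
  rw [hhead]

open Classical in
set_option maxHeartbeats 1000000 in
/-- the decomposition of a `(K+1)`-bounded word at the first occurrence of the letter `K` -/
noncomputable def decompEquiv
    (hlow : ∀ L, (∀ x ∈ L, x < K) → (P L ↔ P₀ L))
    (hsplit : ∀ A L', (∀ x ∈ A, x < K) → (∀ x ∈ L', x < K + 1) →
      (P (A ++ K :: L') ↔ R A L')) :
    W n (K + 1) P ≃ W n K P₀ ⊕
      {AL : List ℕ × List ℕ // AL.1.length + 1 + AL.2.length = n ∧
        (((∀ x ∈ AL.1, x < K) ∧ ∀ x ∈ AL.2, x < K + 1) ∧ R AL.1 AL.2)} where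
  toFun x :=
    if h : ∀ y ∈ x.1, y < K then
      Sum.inl ⟨x.1, x.2.1, h, (hlow _ h).1 x.2.2.2⟩
    else
      Sum.inr ⟨(x.1.takeWhile (lowP K), (x.1.dropWhile (lowP K)).tail), by
        obtain ⟨htw, htail, hdec⟩ := decomp_eq x.1 x.2.2.1 h
        refine ⟨?_, ⟨htw, htail⟩, (hsplit _ _ htw htail).1 (by rw [← hdec]; exact x.2.2.2)⟩
        have hl := x.2.1
        rw [hdec] at hl
        simp only [List.length_append, List.length_cons] at hl
        show (x.1.takeWhile (lowP K)).length + 1 + ((x.1.dropWhile (lowP K)).tail).length = n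
        omega⟩
  invFun x := x.elim
    (fun B => ⟨B.1, B.2.1, fun y hy => Nat.lt_succ_of_lt (B.2.2.1 y hy),
      (hlow _ B.2.2.1).2 B.2.2.2⟩)
    (fun AL => ⟨AL.1.1 ++ K :: AL.1.2, by
      have h1 := AL.2.1
      have h2 := AL.2.2.1.1
      have h3 := AL.2.2.1.2
      refine ⟨by simp; omega, ?_, (hsplit _ _ h2 h3).2 AL.2.2.2⟩
      intro y hy
      rcases List.mem_append.1 hy with h | h
      · exact Nat.lt_succ_of_lt (h2 y h)
      · rcases List.mem_cons.1 h with h | h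
        · omega
        · exact h3 y h⟩)
  left_inv x := by
    by_cases h : ∀ y ∈ x.1, y < K
    · simp only [dif_pos h, Sum.elim_inl]
      rfl
    · simp only [dif_neg h, Sum.elim_inr]
      apply Subtype.ext
      exact (decomp_eq x.1 x.2.2.1 h).2.2.symm
  right_inv x := by
    rcases x with B | AL
    · have hB : ∀ y ∈ (B : W n K P₀).1, y < K := B.2.2.1
      simp only [Sum.elim_inl, dif_pos hB]
      split_ifs with h
      · rfl
      · exact absurd hB h
    · obtain ⟨⟨A, L'⟩, hlen, ⟨hA, hL'⟩, hR⟩ := AL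
      have hnot : ¬∀ y ∈ A ++ K :: L', y < K := by
        intro hc
        have := hc K (by simp)
        omega
      simp only [Sum.elim_inr, dif_neg hnot]
      split_ifs with hc
      · exact absurd hc hnot
      apply congrArg Sum.inr
      apply Subtype.ext
      obtain ⟨e1, e2⟩ := takeWhile_spec (K := K) A L' hA
      show ((A ++ K :: L').takeWhile (lowP K), ((A ++ K :: L').dropWhile (lowP K)).tail) = (A, L')
      rw [e1, e2]
      rfl

end Decomp

section Counting

variable {m₁ r₁ m₂ r₂ : ℕ} (τ : Fin m₁ → Fin r₁) (ν : Fin m₂ → Fin r₂)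

lemma cnt_congr {n k : ℕ} {P P' : List ℕ → Prop}
    (h : ∀ L : List ℕ, L.length = n → (∀ x ∈ L, x < k) → (P L ↔ P' L)) :
    cnt n k P = cnt n k P' :=
  Nat.card_congr (Equiv.subtypeEquivRight (fun L => by
    constructor
    · rintro ⟨h1, h2, h3⟩; exact ⟨h1, h2, (h L h1 h2).1 h3⟩
    · rintro ⟨h1, h2, h3⟩; exact ⟨h1, h2, (h L h1 h2).2 h3⟩))

/-- the pair-subtype produced by `decompEquiv`, as a sigma of products -/
noncomputable def pairsEquiv {K n : ℕ} (PA PB : List ℕ → Prop) :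
    {AL : List ℕ × List ℕ // AL.1.length + 1 + AL.2.length = n ∧
        (((∀ x ∈ AL.1, x < K) ∧ ∀ x ∈ AL.2, x < K + 1) ∧ (PA AL.1 ∧ PB AL.2))} ≃
      (j : Fin n) × (W j K PA × W (n - 1 - j) (K + 1) PB) :=
  (Equiv.subtypeEquivRight (fun AL => by tauto)).trans
    (sigmaPairs (fun A => (∀ x ∈ A, x < K) ∧ PA A)
      (fun B => (∀ x ∈ B, x < K + 1) ∧ PB B) n)

lemma finite_pairs {K n : ℕ} (PA PB : List ℕ → Prop) :
    Finite {AL : List ℕ × List ℕ // AL.1.length + 1 + AL.2.length = n ∧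
        (((∀ x ∈ AL.1, x < K) ∧ ∀ x ∈ AL.2, x < K + 1) ∧ (PA AL.1 ∧ PB AL.2))} :=
  Finite.of_equiv _ (pairsEquiv PA PB).symm

lemma card_pairs {K n : ℕ} (PA PB : List ℕ → Prop) :
    Nat.card {AL : List ℕ × List ℕ // AL.1.length + 1 + AL.2.length = n ∧
        (((∀ x ∈ AL.1, x < K) ∧ ∀ x ∈ AL.2, x < K + 1) ∧ (PA AL.1 ∧ PB AL.2))} =
      ∑ j : Fin n, cnt j K PA * cnt (n - 1 - j) (K + 1) PB := by
  rw [Nat.card_congr (pairsEquiv PA PB)]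
  rw [card_sigma_fin]
  refine Finset.sum_congr rfl fun j _ => ?_
  rw [Nat.card_prod]
  rfl

lemma Qrec (K n : ℕ) :
    cnt n (K + 1) (fun L => ¬ HasLow ν K L) =
      cnt n K (fun L => ¬ HasPat ν L) +
        ∑ j : Fin n, cnt j K (fun L => ¬ HasPat ν L) *
          cnt (n - 1 - j) (K + 1) (fun L => ¬ HasLow ν K L) := by
  have hlow : ∀ L : List ℕ, (∀ x ∈ L, x < K) → (¬ HasLow ν K L ↔ ¬ HasPat ν L) :=
    fun L hL => not_congr (hasLow_iff_hasPat ν hL)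
  have hsplit : ∀ A L' : List ℕ, (∀ x ∈ A, x < K) → (∀ x ∈ L', x < K + 1) →
      (¬ HasLow ν K (A ++ K :: L') ↔ (¬ HasPat ν A ∧ ¬ HasLow ν K L')) := by
    intro A L' hA hL'
    rw [hasLow_split ν hA]
    tauto
  have e := (decompEquiv (n := n) hlow hsplit).trans
    (Equiv.sumCongr (Equiv.refl _) (Equiv.subtypeEquivRight (fun AL => Iff.rfl)))
  haveI := finite_pairs (K := K) (n := n) (fun A => ¬ HasPat ν A) (fun B => ¬ HasLow ν K B)
  show Nat.card _ = _
  rw [Nat.card_congr e, Nat.card_sum,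
    card_pairs (K := K) (n := n) (fun A => ¬ HasPat ν A) (fun B => ¬ HasLow ν K B)]
  rfl

lemma Prec (K n : ℕ) :
    cnt n (K + 1) (fun L => ¬ CS τ ν L) =
      cnt n K (fun L => ¬ CS τ ν L) +
        (∑ j : Fin n, cnt j K (fun A => ¬ CS τ ν A ∧ HasPat τ A) *
            cnt (n - 1 - j) (K + 1) (fun L => ¬ HasLow ν K L) +
         ∑ j : Fin n, cnt j K (fun A => ¬ HasPat τ A) *
            cnt (n - 1 - j) (K + 1) (fun L => ¬ CS τ ν L)) := by
  have hlow : ∀ L : List ℕ, (∀ x ∈ L, x < K) → (¬ CS τ ν L ↔ ¬ CS τ ν L) :=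
    fun L _ => Iff.rfl
  have hsplit : ∀ A L' : List ℕ, (∀ x ∈ A, x < K) → (∀ x ∈ L', x < K + 1) →
      (¬ CS τ ν (A ++ K :: L') ↔
        (¬ CS τ ν A ∧ ¬ CS τ ν L' ∧ ¬ (HasPat τ A ∧ HasLow ν K L'))) := by
    intro A L' hA hL'
    rw [CS_split τ ν hA hL']
    tauto
  have e := decompEquiv (n := n) hlow hsplit
  have esplit := caseSplit
    (r := fun AL : List ℕ × List ℕ => AL.1.length + 1 + AL.2.length = n ∧
      (((∀ x ∈ AL.1, x < K) ∧ ∀ x ∈ AL.2, x < K + 1) ∧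
        (¬ CS τ ν AL.1 ∧ ¬ CS τ ν AL.2 ∧ ¬ (HasPat τ AL.1 ∧ HasLow ν K AL.2))))
    (q := fun AL => HasPat τ AL.1)
    (r1 := fun AL => AL.1.length + 1 + AL.2.length = n ∧
      (((∀ x ∈ AL.1, x < K) ∧ ∀ x ∈ AL.2, x < K + 1) ∧
        ((¬ CS τ ν AL.1 ∧ HasPat τ AL.1) ∧ ¬ HasLow ν K AL.2)))
    (r2 := fun AL => AL.1.length + 1 + AL.2.length = n ∧
      (((∀ x ∈ AL.1, x < K) ∧ ∀ x ∈ AL.2, x < K + 1) ∧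
        ((¬ HasPat τ AL.1) ∧ ¬ CS τ ν AL.2)))
    (h1 := fun AL hr hq => ⟨hr.1, hr.2.1, ⟨hr.2.2.1, hq⟩, fun hl => hr.2.2.2.2 ⟨hq, hl⟩⟩)
    (h2 := fun AL hr hq => ⟨hr.1, hr.2.1, hq, hr.2.2.2.1⟩)
    (h3 := fun AL hr => ⟨hr.1, hr.2.1, hr.2.2.1.1,
      fun hc => hr.2.2.2 ((CS_to_hasLow τ ν hr.2.1.2 hc)), fun hh => hr.2.2.2 hh.2⟩)
    (h4 := fun AL hr => ⟨hr.1, hr.2.1, not_hasPat_CS τ ν hr.2.2.1, hr.2.2.2,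
      fun hh => hr.2.2.1 hh.1⟩)
    (h5 := fun AL hr => hr.2.2.1.2)
    (h6 := fun AL hr => hr.2.2.1)
  have e1 : {AL : List ℕ × List ℕ // AL.1.length + 1 + AL.2.length = n ∧
      (((∀ x ∈ AL.1, x < K) ∧ ∀ x ∈ AL.2, x < K + 1) ∧
        ((¬ CS τ ν AL.1 ∧ HasPat τ AL.1) ∧ ¬ HasLow ν K AL.2))} ≃
      {AL : List ℕ × List ℕ // AL.1.length + 1 + AL.2.length = n ∧
      (((∀ x ∈ AL.1, x < K) ∧ ∀ x ∈ AL.2, x < K + 1) ∧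
        ((fun A => ¬ CS τ ν A ∧ HasPat τ A) AL.1 ∧ (fun B => ¬ HasLow ν K B) AL.2))} :=
    Equiv.subtypeEquivRight (fun AL => Iff.rfl)
  have e2 : {AL : List ℕ × List ℕ // AL.1.length + 1 + AL.2.length = n ∧
      (((∀ x ∈ AL.1, x < K) ∧ ∀ x ∈ AL.2, x < K + 1) ∧
        ((¬ HasPat τ AL.1) ∧ ¬ CS τ ν AL.2))} ≃
      {AL : List ℕ × List ℕ // AL.1.length + 1 + AL.2.length = n ∧
      (((∀ x ∈ AL.1, x < K) ∧ ∀ x ∈ AL.2, x < K + 1) ∧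
        ((fun A => ¬ HasPat τ A) AL.1 ∧ (fun B => ¬ CS τ ν B) AL.2))} :=
    Equiv.subtypeEquivRight (fun AL => Iff.rfl)
  haveI := finite_pairs (K := K) (n := n) (fun A => ¬ CS τ ν A ∧ HasPat τ A)
    (fun B => ¬ HasLow ν K B)
  haveI := finite_pairs (K := K) (n := n) (fun A => ¬ HasPat τ A) (fun B => ¬ CS τ ν B)
  haveI : Finite {AL : List ℕ × List ℕ // AL.1.length + 1 + AL.2.length = n ∧
      (((∀ x ∈ AL.1, x < K) ∧ ∀ x ∈ AL.2, x < K + 1) ∧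
        ((¬ CS τ ν AL.1 ∧ HasPat τ AL.1) ∧ ¬ HasLow ν K AL.2))} := Finite.of_equiv _ e1.symm
  haveI : Finite {AL : List ℕ × List ℕ // AL.1.length + 1 + AL.2.length = n ∧
      (((∀ x ∈ AL.1, x < K) ∧ ∀ x ∈ AL.2, x < K + 1) ∧
        ((¬ HasPat τ AL.1) ∧ ¬ CS τ ν AL.2))} := Finite.of_equiv _ e2.symm
  show Nat.card _ = _
  rw [Nat.card_congr (e.trans (Equiv.sumCongr (Equiv.refl _)
    (esplit.trans (Equiv.sumCongr e1 e2)))), Nat.card_sum, Nat.card_sum,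
    card_pairs (K := K) (n := n) (fun A => ¬ CS τ ν A ∧ HasPat τ A) (fun B => ¬ HasLow ν K B),
    card_pairs (K := K) (n := n) (fun A => ¬ HasPat τ A) (fun B => ¬ CS τ ν B)]
  rfl

/-- splitting off the factor-avoiding words -/
lemma Psplit (n k : ℕ) :
    cnt n k (fun L => ¬ CS τ ν L) =
      cnt n k (fun L => ¬ HasPat τ L) + cnt n k (fun L => ¬ CS τ ν L ∧ HasPat τ L) := by
  have e := caseSplit
    (r := fun L : List ℕ => L.length = n ∧ ((∀ x ∈ L, x < k) ∧ ¬ CS τ ν L))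
    (q := fun L => HasPat τ L)
    (r1 := fun L => L.length = n ∧ ((∀ x ∈ L, x < k) ∧ (¬ CS τ ν L ∧ HasPat τ L)))
    (r2 := fun L => L.length = n ∧ ((∀ x ∈ L, x < k) ∧ ¬ HasPat τ L))
    (h1 := fun L hr hq => ⟨hr.1, hr.2.1, hr.2.2, hq⟩)
    (h2 := fun L hr hq => ⟨hr.1, hr.2.1, hq⟩)
    (h3 := fun L hr => ⟨hr.1, hr.2.1, hr.2.2.1⟩)
    (h4 := fun L hr => ⟨hr.1, hr.2.1, not_hasPat_CS τ ν hr.2.2⟩)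
    (h5 := fun L hr => hr.2.2.2)
    (h6 := fun L hr => hr.2.2)
  have h := Nat.card_congr e
  rw [Nat.card_sum] at h
  rw [Nat.add_comm (Nat.card _)] at h
  exact h

/-- alphabet of size 0 : only the empty word -/
lemma cnt_zero (n : ℕ) {P P' : List ℕ → Prop} (h : P [] ↔ P' []) :
    cnt n 0 P = cnt n 0 P' := by
  apply cnt_congr
  intro L hlen hbdd
  have hnil : L = [] := by
    cases L with
    | nil => rfl
    | cons a L => exact absurd (hbdd a List.mem_cons_self) (by omega)
  rw [hnil]
  exact h

end Counting

section Invariance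

variable {m l : ℕ} (p : Fin m → Fin l)

lemma getD_reverse {L : List ℕ} {r : ℕ} (h : r < L.length) :
    L.reverse.getD r 0 = L.getD (L.length - 1 - r) 0 := by
  rw [List.getD_eq_getElem _ _ (by simpa using h),
    List.getD_eq_getElem _ _ (by omega), List.getElem_reverse]

lemma occ_rev {L : List ℕ} {i : ℕ} (h : occL p L i) :
    occL (PatRev p) L.reverse (L.length - i - m) := by
  obtain ⟨hlen, hcmp⟩ := h
  refine ⟨by rw [List.length_reverse]; omega, fun a b => ?_⟩
  have key : ∀ a : Fin m, L.reverse.getD (L.length - i - m + a) 0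
      = L.getD (i + ↑a.rev) 0 := by
    intro a
    have ha := a.isLt
    have hrev : (↑a.rev : ℕ) = m - 1 - ↑a := by simp [Fin.val_rev]; omega
    rw [getD_reverse (by omega), hrev]
    congr 1
    omega
  rw [key a, key b]
  exact hcmp a.rev b.rev

lemma hasPat_rev_of (L : List ℕ) (h : HasPat p L) : HasPat (PatRev p) L.reverse := by
  obtain ⟨i, hi⟩ := h
  exact ⟨L.length - i - m, occ_rev p hi⟩

lemma patRev_patRev : PatRev (PatRev p) = p := by
  funext a
  simp [PatRev]

lemma hasPat_rev (L : List ℕ) : HasPat (PatRev p) L.reverse ↔ HasPat p L := by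
  constructor
  · intro h
    have h2 := hasPat_rev_of (PatRev p) L.reverse h
    rwa [patRev_patRev, List.reverse_reverse] at h2
  · exact hasPat_rev_of p L

lemma cnt_rev (n k : ℕ) :
    cnt n k (fun L => ¬ HasPat p L) = cnt n k (fun L => ¬ HasPat (PatRev p) L) := by
  apply Nat.card_congr
  refine ⟨fun x => ⟨x.1.reverse, ?_⟩, fun x => ⟨x.1.reverse, ?_⟩, ?_, ?_⟩
  · obtain ⟨h1, h2, h3⟩ := x.2
    exact ⟨by simpa using h1, by simpa using h2, fun hc => h3 ((hasPat_rev p _).1 hc)⟩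
  · obtain ⟨h1, h2, h3⟩ := x.2
    refine ⟨by simpa using h1, by simpa using h2, fun hc => h3 ?_⟩
    have h4 := hasPat_rev_of p x.1.reverse hc
    rwa [List.reverse_reverse] at h4
  · intro x
    apply Subtype.ext
    simp
  · intro x
    apply Subtype.ext
    simp

lemma getD_map_compl {k : ℕ} {L : List ℕ} {r : ℕ} (h : r < L.length) :
    (L.map (fun x => k - 1 - x)).getD r 0 = k - 1 - L.getD r 0 := by
  rw [List.getD_eq_getElem _ _ (by simpa using h), List.getD_eq_getElem _ _ h,
    List.getElem_map]

lemma occ_compl {k : ℕ} {L : List ℕ} (hb : ∀ x ∈ L, x < k) (i : ℕ) :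
    occL (PatCompl p) (L.map (fun x => k - 1 - x)) i ↔ occL p L i := by
  have hlenm : (L.map (fun x => k - 1 - x)).length = L.length := List.length_map _
  have main : ∀ (hl : i + m ≤ L.length) (a b : Fin m),
      (((L.map (fun x => k - 1 - x)).getD (i + ↑a) 0 <
          (L.map (fun x => k - 1 - x)).getD (i + ↑b) 0) ↔ PatCompl p a < PatCompl p b) ↔
      ((L.getD (i + ↑b) 0 < L.getD (i + ↑a) 0) ↔ p b < p a) := by
    intro hl a b
    have hm : ∀ c : Fin m, i + ↑c < L.length := fun c => by have := c.isLt; omega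
    rw [getD_map_compl (hm a), getD_map_compl (hm b)]
    have hxa : L.getD (i + ↑a) 0 < k := hb _ (getD_mem (hm a))
    have hxb : L.getD (i + ↑b) 0 < k := hb _ (getD_mem (hm b))
    have hC : PatCompl p a < PatCompl p b ↔ p b < p a := Fin.rev_lt_rev
    rw [hC]
    constructor
    · intro h
      rw [← h]
      omega
    · intro h
      rw [← h]
      omega
  constructor
  · rintro ⟨h1, h2⟩
    rw [hlenm] at h1
    exact ⟨h1, fun a b => (main h1 b a).1 (h2 b a)⟩
  · rintro ⟨h1, h2⟩
    exact ⟨by omega, fun a b => (main h1 a b).2 (h2 b a)⟩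

lemma hasPat_compl {k : ℕ} {L : List ℕ} (hb : ∀ x ∈ L, x < k) :
    HasPat (PatCompl p) (L.map (fun x => k - 1 - x)) ↔ HasPat p L := by
  constructor
  · rintro ⟨i, hi⟩; exact ⟨i, (occ_compl p hb i).1 hi⟩
  · rintro ⟨i, hi⟩; exact ⟨i, (occ_compl p hb i).2 hi⟩

lemma map_compl_compl {k : ℕ} {L : List ℕ} (hb : ∀ x ∈ L, x < k) :
    (L.map (fun x => k - 1 - x)).map (fun x => k - 1 - x) = L := by
  rw [List.map_map]
  conv_rhs => rw [← List.map_id L]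
  apply List.map_congr_left
  intro x hx
  have := hb x hx
  simp
  omega

lemma cnt_compl (n k : ℕ) :
    cnt n k (fun L => ¬ HasPat p L) = cnt n k (fun L => ¬ HasPat (PatCompl p) L) := by
  apply Nat.card_congr
  refine ⟨fun x => ⟨x.1.map (fun y => k - 1 - y), ?_⟩,
    fun x => ⟨x.1.map (fun y => k - 1 - y), ?_⟩, ?_, ?_⟩
  · obtain ⟨h1, h2, h3⟩ := x.2
    refine ⟨by simpa using h1, ?_, fun hc => h3 ((hasPat_compl p h2).1 hc)⟩
    intro y hy
    rw [List.mem_map] at hy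
    obtain ⟨z, hz, rfl⟩ := hy
    have := h2 z hz
    omega
  · obtain ⟨h1, h2, h3⟩ := x.2
    refine ⟨by simpa using h1, ?_, fun hc => ?_⟩
    · intro y hy
      rw [List.mem_map] at hy
      obtain ⟨z, hz, rfl⟩ := hy
      have := h2 z hz
      omega
    · refine h3 ?_
      have h4 := (hasPat_compl (k := k) p (L := x.1.map (fun y => k - 1 - y)) ?_).2 hc
      · rwa [map_compl_compl x.2.2.1] at h4
      · intro y hy
        rw [List.mem_map] at hy
        obtain ⟨z, hz, rfl⟩ := hy
        have := x.2.2.1 z hz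
        omega
  · intro x
    apply Subtype.ext
    exact map_compl_compl x.2.2.1
  · intro x
    apply Subtype.ext
    exact map_compl_compl x.2.2.1

lemma cnt_triv {f : (Fin m → Fin l) → (Fin m → Fin l)} (hf : IsTrivialBij f) (n k : ℕ) :
    cnt n k (fun L => ¬ HasPat p L) = cnt n k (fun L => ¬ HasPat (f p) L) := by
  rcases hf with rfl | rfl | rfl | rfl
  · rfl
  · exact cnt_rev p n k
  · exact cnt_compl p n k
  · exact (cnt_compl p n k).trans (cnt_rev (PatCompl p) n k)

end Invariance

section Main

variable {m₁ r₁ m₂ r₂ : ℕ}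

lemma Qinv (ν ν' : Fin m₂ → Fin r₂)
    (hN : ∀ n k : ℕ, cnt n k (fun L => ¬ HasPat ν L) = cnt n k (fun L => ¬ HasPat ν' L))
    (K : ℕ) : ∀ n : ℕ, cnt n (K + 1) (fun L => ¬ HasLow ν K L) =
      cnt n (K + 1) (fun L => ¬ HasLow ν' K L) := by
  intro n
  induction n using Nat.strong_induction_on with
  | _ n ih =>
    rw [Qrec ν K n, Qrec ν' K n, hN n K]
    congr 1
    apply Finset.sum_congr rfl
    intro j _
    rw [hN j K, ih (n - 1 - j) (by have := j.isLt; omega)]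

lemma main_list (τ τ' : Fin m₁ → Fin r₁) (ν ν' : Fin m₂ → Fin r₂)
    (hT : ∀ n k : ℕ, cnt n k (fun L => ¬ HasPat τ L) = cnt n k (fun L => ¬ HasPat τ' L))
    (hN : ∀ n k : ℕ, cnt n k (fun L => ¬ HasPat ν L) = cnt n k (fun L => ¬ HasPat ν' L)) :
    ∀ k n : ℕ, cnt n k (fun L => ¬ CS τ ν L) = cnt n k (fun L => ¬ CS τ' ν' L) := by
  intro k
  induction k with
  | zero =>
    intro n
    exact cnt_zero n (iff_of_true (CS_nil τ ν) (CS_nil τ' ν'))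
  | succ K ihk =>
    have hQ := Qinv ν ν' hN K
    have hS : ∀ n : ℕ, cnt n K (fun L => ¬ CS τ ν L ∧ HasPat τ L) =
        cnt n K (fun L => ¬ CS τ' ν' L ∧ HasPat τ' L) := by
      intro n
      have h1 := Psplit τ ν n K
      have h2 := Psplit τ' ν' n K
      have h3 := ihk n
      have h4 := hT n K
      omega
    intro n
    induction n using Nat.strong_induction_on with
    | _ n ihn =>
      rw [Prec τ ν K n, Prec τ' ν' K n, ihk n]
      congr 1
      congr 1
      · apply Finset.sum_congr rfl
        intro j _
        rw [hS j, hQ (n - 1 - j)]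
      · apply Finset.sum_congr rfl
        intro j _
        rw [hT j K, ihn (n - 1 - j) (by have := j.isLt; omega)]

end Main

section Transfer

variable {m l m₁ r₁ m₂ r₂ n k : ℕ}

def toL (σ : Fin n → Fin k) : List ℕ := (List.ofFn σ).map Fin.val

lemma toL_length (σ : Fin n → Fin k) : (toL σ).length = n := by simp [toL]

lemma toL_getD (σ : Fin n → Fin k) {r : ℕ} (hr : r < n) :
    (toL σ).getD r 0 = (σ ⟨r, hr⟩ : ℕ) := by
  rw [List.getD_eq_getElem _ _ (by rw [toL_length]; exact hr)]
  simp [toL]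

lemma occ_iff (p : Fin m → Fin l) (σ : Fin n → Fin k) (i : ℕ) :
    OccursAt p σ i ↔ occL p (toL σ) i := by
  constructor
  · rintro ⟨h1, h2⟩
    refine ⟨by rw [toL_length]; exact h1, fun a b => ?_⟩
    rw [toL_getD σ (by have := a.isLt; omega), toL_getD σ (by have := b.isLt; omega)]
    rw [← h2 a b]
    exact Iff.symm Fin.lt_def
  · rintro ⟨h1, h2⟩
    rw [toL_length] at h1
    refine ⟨h1, fun a b => ?_⟩
    have h3 := h2 a b
    rw [toL_getD σ (by have := a.isLt; omega), toL_getD σ (by have := b.isLt; omega)] at h3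
    rw [← h3]
    exact Fin.lt_def

lemma contains_iff (τ : Fin m₁ → Fin r₁) (ν : Fin m₂ → Fin r₂) (σ : Fin n → Fin k) :
    ContainsShuffle τ ν σ ↔ CS τ ν (toL σ) := by
  constructor
  · rintro ⟨i, pp, q, hp, h1, h2, h3, h4, h5, h6⟩
    refine ⟨i, pp, q, h1, h2, by rw [toL_length]; exact h3,
      (occ_iff τ σ i).1 h4, (occ_iff ν σ q).1 h5, fun a => ?_, fun b => ?_⟩
    · have ha := a.isLt
      have h7 := h6 (i + ↑a) (by omega) (Or.inl ⟨by omega, by omega⟩)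
      rw [toL_getD σ (by omega), toL_getD σ hp]
      exact Fin.lt_def.1 h7
    · have hb := b.isLt
      have h7 := h6 (q + ↑b) (by omega) (Or.inr ⟨by omega, by omega⟩)
      rw [toL_getD σ (by omega), toL_getD σ hp]
      exact Fin.lt_def.1 h7
  · rintro ⟨i, pp, q, h1, h2, h3, h4, h5, h6, h7⟩
    rw [toL_length] at h3
    have hp : pp < n := by omega
    refine ⟨i, pp, q, hp, h1, h2, h3, (occ_iff τ σ i).2 h4, (occ_iff ν σ q).2 h5, ?_⟩
    rintro r hr (⟨hr1, hr2⟩ | ⟨hr1, hr2⟩)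
    · have h8 := h6 ⟨r - i, by omega⟩
      rw [toL_getD σ (by simp; omega), toL_getD σ hp] at h8
      apply Fin.lt_def.2
      convert h8 using 3
      simp
      omega
    · have h8 := h7 ⟨r - q, by omega⟩
      rw [toL_getD σ (by simp; omega), toL_getD σ hp] at h8
      apply Fin.lt_def.2
      convert h8 using 3
      simp
      omega

lemma transfer (τ : Fin m₁ → Fin r₁) (ν : Fin m₂ → Fin r₂) :
    Nat.card {σ : Fin n → Fin k // ¬ ContainsShuffle τ ν σ} =
      cnt n k (fun L => ¬ CS τ ν L) := by
  apply Nat.card_congr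
  refine ⟨fun x => ⟨toL x.1, toL_length x.1, ?_, fun hc => x.2 ((contains_iff τ ν x.1).2 hc)⟩,
    fun x => ⟨fun i => ⟨x.1.getD i 0, x.2.2.1 _ (getD_mem (by rw [x.2.1]; exact i.isLt))⟩, ?_⟩,
    ?_, ?_⟩
  · intro y hy
    simp only [toL, List.mem_map, List.mem_ofFn] at hy
    obtain ⟨z, ⟨w, rfl⟩, rfl⟩ := hy
    exact (x.1 w).isLt
  · intro hc
    apply x.2.2.2
    have h9 := (contains_iff τ ν _).1 hc
    have hrecon : toL (fun i : Fin n =>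
        (⟨x.1.getD i 0, x.2.2.1 _ (getD_mem (by rw [x.2.1]; exact i.isLt))⟩ : Fin k)) = x.1 := by
      apply List.ext_getElem (by rw [toL_length, x.2.1])
      intro i h1 h2
      have h3 : i < n := by rw [toL_length] at h1; exact h1
      rw [← List.getD_eq_getElem _ 0 h1, ← List.getD_eq_getElem _ 0 h2, toL_getD _ h3]
    rwa [hrecon] at h9
  · intro x
    apply Subtype.ext
    funext i
    apply Fin.ext
    simp only
    rw [toL_getD _ i.isLt]
  · intro x
    apply Subtype.ext
    apply List.ext_getElem (by rw [toL_length, x.2.1])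
    intro i h1 h2
    have h3 : i < n := by rw [toL_length] at h1; exact h1
    rw [← List.getD_eq_getElem _ 0 h1, ← List.getD_eq_getElem _ 0 h2, toL_getD _ h3]

end Transfer

end ShufAux

theorem stmt6 (m₁ r₁ m₂ r₂ : ℕ) (τ : Fin m₁ → Fin r₁) (ν : Fin m₂ → Fin r₂)
    (f₁ : (Fin m₁ → Fin r₁) → (Fin m₁ → Fin r₁))
    (f₂ : (Fin m₂ → Fin r₂) → (Fin m₂ → Fin r₂))
    (hf₁ : IsTrivialBij f₁) (hf₂ : IsTrivialBij f₂)
    (n k : ℕ) (hk : 1 ≤ k) :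
    Nat.card {σ : Fin n → Fin k // ¬ ContainsShuffle τ ν σ} =
      Nat.card {σ : Fin n → Fin k // ¬ ContainsShuffle (f₁ τ) (f₂ ν) σ} := by
  rw [ShufAux.transfer τ ν, ShufAux.transfer (f₁ τ) (f₂ ν)]
  exact ShufAux.main_list τ (f₁ τ) ν (f₂ ν)
    (fun n k => ShufAux.cnt_triv τ hf₁ n k)
    (fun n k => ShufAux.cnt_triv ν hf₂ n k) k n
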